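/- No chattering: for each agent i of the hybrid system with hysteretic quantization, any two consecutive switching times of q_i are separated by at least (Δ/2)/(‖L‖_∞ · (‖q(0,0)‖_∞ + Δ/2)). Consequently the set of all switching times is locally finite (finitely many in every compact subset of [0,∞)). -/

import Mathlib

open Matrix

/-- no chattering: for each agent `i` of the hybrid system with
hysteretic quantization, any two consecutive switching times of `q_i` are
separated by at least `(Δ/2)/(‖L‖_∞·(‖q(0,0)‖_∞ + Δ/2))`; consequently the set
of switching times is locally finite (finitely many in every compact set). -/
theorem hybrid_no_chattering (N : ℕ) [NeZero N] (Δ : ℝ) (hΔ : 0 < Δ)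
    (A : Matrix (Fin N) (Fin N) ℝ)
    (hA : ∀ i j, 0 ≤ A i j) (hdiag : ∀ i, A i i = 0)
    (hbal : ∀ i, ∑ j, A i j = ∑ j, A j i)
    (L : Matrix (Fin N) (Fin N) ℝ)
    (hL : L = (Matrix.diagonal fun i => ∑ j, A i j) - A)
    (τ : ℕ → ℝ) (hτ0 : τ 0 = 0) (hτ : Monotone τ)
    (hnontriv : ∀ j, 1 ≤ j → τ j < τ (j + 1))
    (x : ℕ → ℝ → Fin N → ℝ) (q : ℕ → Fin N → ℝ)
    (hlat : ∀ j i, ∃ m : ℤ, q j i = m * (Δ / 2))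
    (hflow : ∀ j, ∀ s ∈ Set.Icc (τ j) (τ (j + 1)),
      x j s = x j (τ j) + (s - τ j) • (-(L.mulVec (q j))))
    (hC : ∀ j, ∀ s ∈ Set.Ico (τ j) (τ (j + 1)), ∀ i, |x j s i - q j i| < Δ / 2)
    (hjumpx : ∀ j, x (j + 1) (τ (j + 1)) = x j (τ (j + 1)))
    (hjumpq : ∀ j i, q (j + 1) i =
      if q j i + Δ / 2 ≤ x j (τ (j + 1)) i then q j i + Δ / 2
      else if x j (τ (j + 1)) i ≤ q j i - Δ / 2 then q j i - Δ / 2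
      else q j i)
    (hX0 : ∀ i, q 0 i - Δ / 2 ≤ x 0 0 i ∧ x 0 0 i < q 0 i + Δ / 2)
    (CL Q0 : ℝ)
    (hCLdef : CL = Finset.univ.sup' Finset.univ_nonempty (fun i => ∑ j, |L i j|))
    (hQ0def : Q0 = Finset.univ.sup' Finset.univ_nonempty (fun i => |q 0 i|)) :
    (∀ i : Fin N, ∀ j j' : ℕ, j < j' →
      q (j + 1) i ≠ q j i → q (j' + 1) i ≠ q j' i →
      (∀ m, j < m → m < j' → q (m + 1) i = q m i) →
      Δ / 2 / (CL * (Q0 + Δ / 2)) ≤ τ (j' + 1) - τ (j + 1)) ∧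
    (∀ K : Set ℝ, IsCompact K →
      {j : ℕ | τ (j + 1) ∈ K ∧ q (j + 1) ≠ q j}.Finite) := by
  classical
  have hΔ2 : (0:ℝ) < Δ / 2 := by linarith
  obtain ⟨i0⟩ : Nonempty (Fin N) := ⟨⟨0, Nat.pos_of_ne_zero (NeZero.ne N)⟩⟩
  have hQ0 : 0 ≤ Q0 := by
    rw [hQ0def]
    exact le_trans (abs_nonneg _) (Finset.le_sup' (fun i => |q 0 i|) (Finset.mem_univ i0))
  have hCL : 0 ≤ CL := by
    rw [hCLdef]
    exact le_trans (Finset.sum_nonneg fun j _ => abs_nonneg _)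
      (Finset.le_sup' (fun i => ∑ j, |L i j|) (Finset.mem_univ i0))
  have hB : (0:ℝ) < Q0 + Δ / 2 := by linarith
  have hτle : ∀ m : ℕ, τ m ≤ τ (m + 1) := fun m => hτ (Nat.le_succ m)
  -- pointwise flow evaluation
  have hxe : ∀ m i, x m (τ (m + 1)) i
      = x m (τ m) i + (τ (m + 1) - τ m) * (-(L.mulVec (q m) i)) := by
    intro m i
    have h := congrFun (hflow m (τ (m + 1)) ⟨hτle m, le_refl _⟩) i
    simpa [Pi.add_apply, Pi.smul_apply, Pi.neg_apply, smul_eq_mul] using h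
  have hxs' : ∀ m s, τ m ≤ s → s ≤ τ (m + 1) → ∀ i, x m s i
      = x m (τ m) i + (s - τ m) * (-(L.mulVec (q m) i)) := by
    intro m s h1 h2 i
    have h := congrFun (hflow m s ⟨h1, h2⟩) i
    simpa [Pi.add_apply, Pi.smul_apply, Pi.neg_apply, smul_eq_mul] using h
  -- velocity formula
  have hvf : ∀ m i, -(L.mulVec (q m) i) = ∑ j, A i j * (q m j - q m i) := by
    intro m i
    rw [hL, Matrix.sub_mulVec]
    have h1 : (Matrix.diagonal fun i => ∑ j, A i j).mulVec (q m) i = (∑ j, A i j) * q m i :=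
      Matrix.mulVec_diagonal _ _ _
    have h2 : A.mulVec (q m) i = ∑ j, A i j * q m j := by
      simp [Matrix.mulVec, dotProduct]
    simp only [Pi.sub_apply, h1, h2]
    have h3 : ∑ j, A i j * (q m j - q m i) = (∑ j, A i j * q m j) - (∑ j, A i j) * q m i := by
      rw [Finset.sum_mul, ← Finset.sum_sub_distrib]
      exact Finset.sum_congr rfl fun j _ => by ring
    rw [h3]
    ring
  -- strict containment at the start of each flow interval
  have hstrictU : ∀ m i, x m (τ m) i < q m i + Δ / 2 := by
    intro m i
    rcases Nat.eq_zero_or_pos m with rfl | hm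
    · rw [hτ0]; exact (hX0 i).2
    · have h := hC m (τ m) ⟨le_refl _, hnontriv m hm⟩ i
      have := abs_lt.mp h
      linarith [this.2]
  have hstrictL : ∀ m, 1 ≤ m → ∀ i, q m i - Δ / 2 < x m (τ m) i := by
    intro m hm i
    have h := hC m (τ m) ⟨le_refl _, hnontriv m hm⟩ i
    have := abs_lt.mp h
    linarith [this.1]
  -- closure of the cell condition at the end of each flow interval
  have hcell : ∀ m i, |x m (τ (m + 1)) i - q m i| ≤ Δ / 2 := by
    intro m i
    rcases eq_or_lt_of_le (hτle m) with heq | hlt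
    · have hx1 : x m (τ (m + 1)) i = x m (τ m) i := by
        rw [hxe m i, ← heq]; ring
      rcases Nat.eq_zero_or_pos m with rfl | hm
      · rw [hx1, hτ0]
        have h := hX0 i
        rw [abs_le]; constructor <;> linarith [h.1, h.2]
      · exact absurd heq (ne_of_lt (hnontriv m hm))
    · refine le_of_forall_pos_le_add fun ε hε => ?_
      set V : ℝ := |(-(L.mulVec (q m) i))| + 1 with hV
      have hVpos : 0 < V := by positivity
      have hεV : 0 < ε / V := div_pos hε hVpos
      set s : ℝ := max (τ m) (τ (m + 1) - ε / V) with hs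
      have hsmem : s ∈ Set.Ico (τ m) (τ (m + 1)) :=
        ⟨le_max_left _ _, max_lt hlt (by linarith)⟩
      have h1 := hC m s hsmem i
      have hdiff : x m (τ (m + 1)) i - x m s i
          = (τ (m + 1) - s) * (-(L.mulVec (q m) i)) := by
        rw [hxe m i, hxs' m s hsmem.1 hsmem.2.le i]; ring
      have hb1 : τ (m + 1) - s ≤ ε / V := by
        have := le_max_right (τ m) (τ (m + 1) - ε / V); linarith
      have hb0 : 0 ≤ τ (m + 1) - s := by linarith [hsmem.2.le]
      have habs : |x m (τ (m + 1)) i - x m s i| ≤ ε := by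
        rw [hdiff, abs_mul, abs_of_nonneg hb0]
        calc (τ (m + 1) - s) * |(-(L.mulVec (q m) i))|
            ≤ (ε / V) * V := by
              apply mul_le_mul hb1 (by rw [hV]; linarith) (abs_nonneg _) hεV.le
          _ = ε := div_mul_cancel₀ _ hVpos.ne'
      calc |x m (τ (m + 1)) i - q m i|
          ≤ |x m (τ (m + 1)) i - x m s i| + |x m s i - q m i| := abs_sub_le _ _ _
        _ ≤ Δ / 2 + ε := by linarith
  -- a switch lands x exactly on the new quantization level
  have hswitch : ∀ m i, q (m + 1) i ≠ q m i → q (m + 1) i = x m (τ (m + 1)) i := by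
    intro m i hne
    have hc := abs_le.mp (hcell m i)
    rw [hjumpq m i] at hne ⊢
    split_ifs at hne ⊢ with h1 h2
    · linarith [hc.2]
    · linarith [hc.1]
    · exact absurd rfl hne
  -- lattice step lemma
  have hlatstep : ∀ a b : ℝ, (∃ m : ℤ, a = m * (Δ / 2)) → (∃ m : ℤ, b = m * (Δ / 2)) →
      a < b → a + Δ / 2 ≤ b := by
    rintro a b ⟨ma, rfl⟩ ⟨mb, rfl⟩ hab
    have h1 : ma < mb := by
      by_contra h
      push_neg at h
      exact absurd (mul_le_mul_of_nonneg_right (Int.cast_le.mpr h) hΔ2.le) (not_le.mpr hab)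
    have h2 : (ma:ℝ) + 1 ≤ mb := by exact_mod_cast h1
    nlinarith [mul_le_mul_of_nonneg_right h2 hΔ2.le]
  -- max/min of initial quantization
  obtain ⟨ix, -, hix⟩ := Finset.exists_mem_eq_sup' Finset.univ_nonempty (q 0)
  obtain ⟨in0, -, hin⟩ := Finset.exists_mem_eq_inf' Finset.univ_nonempty (q 0)
  set Mx : ℝ := Finset.univ.sup' Finset.univ_nonempty (q 0) with hMxdef
  set Mn : ℝ := Finset.univ.inf' Finset.univ_nonempty (q 0) with hMndef
  have hMxlat : ∃ m : ℤ, Mx = m * (Δ / 2) := hix ▸ hlat 0 ix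
  have hMnlat : ∃ m : ℤ, Mn = m * (Δ / 2) := hin ▸ hlat 0 in0
  have hMxQ0 : Mx ≤ Q0 := by
    rw [hix, hQ0def]
    exact le_trans (le_abs_self _) (Finset.le_sup' (fun i => |q 0 i|) (Finset.mem_univ ix))
  have hMnQ0 : -Q0 ≤ Mn := by
    rw [hin, hQ0def]
    exact le_trans (neg_le_neg (Finset.le_sup' (fun i => |q 0 i|) (Finset.mem_univ in0)))
      (neg_abs_le _)
  -- upper bound invariant
  have hub : ∀ m i, q m i ≤ Mx := by
    intro m
    induction m with
    | zero => exact fun i => Finset.le_sup' (q 0) (Finset.mem_univ i)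
    | succ m ih =>
      intro i
      rw [hjumpq m i]
      split_ifs with h1 h2
      · rcases eq_or_lt_of_le (ih i) with heq | hlt
        · exfalso
          have hv : -(L.mulVec (q m) i) ≤ 0 := by
            rw [hvf m i]
            apply Finset.sum_nonpos
            intro j _
            apply mul_nonpos_of_nonneg_of_nonpos (hA i j)
            have := ih j
            linarith [heq]
          have hd : (0:ℝ) ≤ τ (m + 1) - τ m := by linarith [hτle m]
          have := mul_nonpos_of_nonneg_of_nonpos hd hv
          have hx1 := hxe m i
          have hsu := hstrictU m i
          linarith
        · linarith [hlatstep (q m i) Mx (hlat m i) hMxlat hlt]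
      · linarith [ih i]
      · exact ih i
  -- lower bound invariant
  have hlb : ∀ m i, Mn - Δ / 2 ≤ q m i := by
    intro m
    induction m with
    | zero => intro i; linarith [Finset.inf'_le (q 0) (Finset.mem_univ i)]
    | succ m ih =>
      intro i
      rw [hjumpq m i]
      split_ifs with h1 h2
      · linarith [ih i]
      · by_cases hge : Mn ≤ q m i
        · linarith
        · push_neg at hge
          exfalso
          rcases Nat.eq_zero_or_pos m with rfl | hm
          · exact absurd (Finset.inf'_le (q 0) (Finset.mem_univ i)) (not_le.mpr hge)
          · have heq : q m i = Mn - Δ / 2 := by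
              have := hlatstep (q m i) Mn (hlat m i) hMnlat hge
              linarith [ih i]
            have hv : 0 ≤ -(L.mulVec (q m) i) := by
              rw [hvf m i]
              apply Finset.sum_nonneg
              intro j _
              exact mul_nonneg (hA i j) (by linarith [ih j])
            have hd : (0:ℝ) ≤ τ (m + 1) - τ m := by linarith [hτle m]
            have := mul_nonneg hd hv
            have hx1 := hxe m i
            have hsl := hstrictL m hm i
            linarith
      · exact ih i
  -- boundedness of q
  have hqb : ∀ m j, |q m j| ≤ Q0 + Δ / 2 := by
    intro m j
    rw [abs_le]
    exact ⟨by linarith [hlb m j, hMnQ0], by linarith [hub m j, hMxQ0]⟩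
  -- row-sum bound
  have hrow : ∀ i, (∑ j, |L i j|) ≤ CL := by
    intro i
    rw [hCLdef]
    exact Finset.le_sup' (fun i => ∑ j, |L i j|) (Finset.mem_univ i)
  -- velocity bound
  have hvb : ∀ m i, |(-(L.mulVec (q m) i))| ≤ CL * (Q0 + Δ / 2) := by
    intro m i
    rw [abs_neg]
    calc |L.mulVec (q m) i| ≤ ∑ j, |L i j * q m j| := by
          simp only [Matrix.mulVec, dotProduct]
          exact Finset.abs_sum_le_sum_abs _ _
      _ ≤ ∑ j, |L i j| * (Q0 + Δ / 2) := by
          apply Finset.sum_le_sum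
          intro j _
          rw [abs_mul]
          exact mul_le_mul_of_nonneg_left (hqb m j) (abs_nonneg _)
      _ ≤ CL * (Q0 + Δ / 2) := by
          rw [← Finset.sum_mul]
          exact mul_le_mul_of_nonneg_right (hrow i) hB.le
  -- Lipschitz bound on x between jump times
  have hlip : ∀ (i : Fin N) (a b : ℕ), a ≤ b →
      |x b (τ b) i - x a (τ a) i| ≤ CL * (Q0 + Δ / 2) * (τ b - τ a) := by
    intro i a b hab
    induction b, hab using Nat.le_induction with
    | base => simp
    | succ b hab ih =>
      have h1 : x (b + 1) (τ (b + 1)) i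
          = x b (τ b) i + (τ (b + 1) - τ b) * (-(L.mulVec (q b) i)) := by
        rw [hjumpx b]; exact hxe b i
      have hd : (0:ℝ) ≤ τ (b + 1) - τ b := by linarith [hτle b]
      have h3 : |x (b + 1) (τ (b + 1)) i - x b (τ b) i|
          ≤ CL * (Q0 + Δ / 2) * (τ (b + 1) - τ b) := by
        have heq2 : x (b + 1) (τ (b + 1)) i - x b (τ b) i
            = (τ (b + 1) - τ b) * (-(L.mulVec (q b) i)) := by rw [h1]; ring
        rw [heq2, abs_mul, abs_of_nonneg hd]
        calc (τ (b + 1) - τ b) * |(-(L.mulVec (q b) i))|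
            ≤ (τ (b + 1) - τ b) * (CL * (Q0 + Δ / 2)) :=
              mul_le_mul_of_nonneg_left (hvb b i) hd
          _ = CL * (Q0 + Δ / 2) * (τ (b + 1) - τ b) := by ring
      calc |x (b + 1) (τ (b + 1)) i - x a (τ a) i|
          ≤ |x (b + 1) (τ (b + 1)) i - x b (τ b) i| + |x b (τ b) i - x a (τ a) i| :=
            abs_sub_le _ _ _
        _ ≤ CL * (Q0 + Δ / 2) * (τ (b + 1) - τ b) + CL * (Q0 + Δ / 2) * (τ b - τ a) :=
            add_le_add h3 ih
        _ = CL * (Q0 + Δ / 2) * (τ (b + 1) - τ a) := by ring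
  -- the dwell-time bound (first conjunct)
  have key : ∀ i : Fin N, ∀ j j' : ℕ, j < j' →
      q (j + 1) i ≠ q j i → q (j' + 1) i ≠ q j' i →
      (∀ m, j < m → m < j' → q (m + 1) i = q m i) →
      Δ / 2 / (CL * (Q0 + Δ / 2)) ≤ τ (j' + 1) - τ (j + 1) := by
    intro i j j' hjj hsw hsw' hbet
    have hconst : ∀ m, j + 1 ≤ m → m ≤ j' → q m i = q (j + 1) i := by
      intro m hm1
      induction m, hm1 using Nat.le_induction with
      | base => intro _; rfl
      | succ m hm ih =>
        intro hm2
        rw [hbet m (by omega) (by omega), ih (by omega)]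
    have hq' : q j' i = q (j + 1) i := hconst j' (by omega) (le_refl _)
    have hA1 : x (j + 1) (τ (j + 1)) i = q (j + 1) i := by
      rw [hjumpx j]; exact (hswitch j i hsw).symm
    have hdist : Δ / 2 ≤ |x j' (τ (j' + 1)) i - q (j + 1) i| := by
      rw [hjumpq j' i] at hsw'
      split_ifs at hsw' with h1 h2
      · have h : Δ / 2 ≤ x j' (τ (j' + 1)) i - q (j + 1) i := by
          rw [← hq']; linarith
        exact h.trans (le_abs_self _)
      · have h : Δ / 2 ≤ -(x j' (τ (j' + 1)) i - q (j + 1) i) := by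
          rw [← hq']; linarith
        exact h.trans (neg_le_abs _)
      · exact absurd rfl hsw'
    have hxx : x (j' + 1) (τ (j' + 1)) i = x j' (τ (j' + 1)) i := congrFun (hjumpx j') i
    have hfinal : Δ / 2 ≤ (τ (j' + 1) - τ (j + 1)) * (CL * (Q0 + Δ / 2)) := by
      calc Δ / 2 ≤ |x j' (τ (j' + 1)) i - q (j + 1) i| := hdist
        _ = |x (j' + 1) (τ (j' + 1)) i - x (j + 1) (τ (j + 1)) i| := by rw [hxx, hA1]
        _ ≤ CL * (Q0 + Δ / 2) * (τ (j' + 1) - τ (j + 1)) := hlip i (j + 1) (j' + 1) (by omega)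
        _ = (τ (j' + 1) - τ (j + 1)) * (CL * (Q0 + Δ / 2)) := by ring
    have hCLB : 0 < CL * (Q0 + Δ / 2) := by
      rcases (mul_nonneg hCL hB.le).lt_or_eq with h | h
      · exact h
      · exfalso; rw [← h, mul_zero] at hfinal; linarith
    rw [div_le_iff₀ hCLB]
    exact hfinal
  refine ⟨key, ?_⟩
  -- local finiteness of switching times
  intro K hK
  rcases Set.eq_empty_or_nonempty K with rfl | hne
  · simp
  obtain ⟨b, hbK⟩ := hK.exists_isGreatest hne
  have hbub : ∀ y ∈ K, y ≤ b := fun y hy => hbK.2 hy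
  by_cases hCL0 : CL = 0
  · -- degenerate case: L = 0, no switches after step 0
    apply Set.Finite.subset (Set.finite_singleton 0)
    intro j hj
    simp only [Set.mem_setOf_eq] at hj
    simp only [Set.mem_singleton_iff]
    by_contra hj0
    have hj1 : 1 ≤ j := by omega
    apply hj.2
    funext i
    have hv0 : -(L.mulVec (q j) i) = 0 := by
      have h := hvb j i
      rw [hCL0, zero_mul] at h
      exact abs_nonpos_iff.mp h
    have hx1 : x j (τ (j + 1)) i = x j (τ j) i := by
      rw [hxe j i, hv0]; ring
    rw [hjumpq j i]
    split_ifs with h1 h2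
    · exfalso; rw [hx1] at h1; linarith [hstrictU j i]
    · exfalso; rw [hx1] at h2; linarith [hstrictL j hj1 i]
    · rfl
  · have hCLpos : 0 < CL := lt_of_le_of_ne hCL (Ne.symm hCL0)
    have hCLB : 0 < CL * (Q0 + Δ / 2) := mul_pos hCLpos hB
    have hdpos : 0 < Δ / 2 / (CL * (Q0 + Δ / 2)) := div_pos hΔ2 hCLB
    set d : ℝ := Δ / 2 / (CL * (Q0 + Δ / 2)) with hddef
    have hsub : {j : ℕ | τ (j + 1) ∈ K ∧ q (j + 1) ≠ q j}
        ⊆ ⋃ i : Fin N, {j : ℕ | q (j + 1) i ≠ q j i ∧ τ (j + 1) ≤ b} := by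
      intro j hj
      obtain ⟨i, hi⟩ := Function.ne_iff.mp hj.2
      exact Set.mem_iUnion.mpr ⟨i, hi, hbub _ hj.1⟩
    refine Set.Finite.subset (Set.finite_iUnion fun i => ?_) hsub
    set p : ℕ → Prop := fun m => q (m + 1) i ≠ q m i with hpdef
    by_cases hinf : (setOf p).Infinite
    · -- enumerate the switches of agent i
      have hmem : ∀ k, p (Nat.nth p k) := fun k => Nat.nth_mem_of_infinite hinf k
      have hmono : ∀ k, Nat.nth p k < Nat.nth p (k + 1) :=
        fun k => (Nat.nth_lt_nth hinf).mpr (by omega)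
      have hbetween : ∀ k m, Nat.nth p k < m → m < Nat.nth p (k + 1) → ¬ p m := by
        intro k m h1 h2 hpm
        have hc := Nat.nth_count (p := p) hpm
        have h1' : k < Nat.count p m := by
          by_contra h
          push_neg at h
          have := (Nat.nth_le_nth hinf).mpr h
          rw [hc] at this
          omega
        have h2' := (Nat.nth_le_nth hinf).mpr (show k + 1 ≤ Nat.count p m by omega)
        rw [hc] at h2'
        omega
      have hgrow : ∀ k : ℕ, τ (Nat.nth p 0 + 1) + (k : ℝ) * d ≤ τ (Nat.nth p k + 1) := by
        intro k
        induction k with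
        | zero => simp
        | succ k ih =>
          have hdwell := key i (Nat.nth p k) (Nat.nth p (k + 1)) (hmono k) (hmem k)
            (hmem (k + 1)) (fun m hm1 hm2 => by
              by_contra hne
              exact hbetween k m hm1 hm2 hne)
          push_cast
          linarith
      obtain ⟨k0, hk0⟩ := exists_nat_gt ((b - τ (Nat.nth p 0 + 1)) / d)
      have hk0' : b < τ (Nat.nth p 0 + 1) + (k0 : ℝ) * d := by
        have := (div_lt_iff₀ hdpos).mp hk0
        linarith
      apply Set.Finite.subset ((Set.finite_Iio k0).image (Nat.nth p))
      intro j hj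
      have hpj : p j := hj.1
      have hjb : τ (j + 1) ≤ b := hj.2
      refine (Set.mem_image _ _ _).mpr ⟨Nat.count p j, ?_, Nat.nth_count hpj⟩
      simp only [Set.mem_Iio]
      by_contra h
      push_neg at h
      have h1 : τ (Nat.nth p 0 + 1) + (k0 : ℝ) * d
          ≤ τ (Nat.nth p 0 + 1) + (Nat.count p j : ℝ) * d := by
        have hcast : (k0 : ℝ) ≤ (Nat.count p j : ℝ) := by exact_mod_cast h
        nlinarith
      have h2 := hgrow (Nat.count p j)
      rw [Nat.nth_count hpj] at h2
      linarith
    · rw [Set.not_infinite] at hinf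
      exact hinf.subset fun j hj => hj.1
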